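/- Let I=(p_t)_{t∈[n]} be an instance and Î=(p̂_t)_{t∈[n]} a prediction such that the underpredicted instance U(I,Î) has at least one time t with min{p_t,p̂_t} > 0. Then |opt(I) − opt(Î)| ≤ η(I,Î); that is, the prediction error η satisfies Lipschitzness. -/

import Mathlib

open Finset

/-- Waiting time from `t` until the first acknowledgment in `X` at or after `t` (`0` if none). -/
noncomputable def ackWait (X : Finset ℕ) (t : ℕ) : ℕ :=
  if h : (X.filter fun x => t ≤ x).Nonempty then (X.filter fun x => t ≤ x).min' h - t else 0

/-- Delay cost `D(I,X)` of solution `X` for the instance `p` on horizon `{a, …, b}`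
with delay parameter `d`. -/
noncomputable def delayCost (d : ℝ) (a b : ℕ) (p : ℕ → ℝ) (X : Finset ℕ) : ℝ :=
  (1 / d) * ∑ t ∈ Finset.Icc a b, p t * (ackWait X t : ℝ)

/-- Total cost `F(I,X) = |X| + D(I,X)`. -/
noncomputable def cost (d : ℝ) (a b : ℕ) (p : ℕ → ℝ) (X : Finset ℕ) : ℝ :=
  (X.card : ℝ) + delayCost d a b p X

/-- Feasibility of `X` for the instance `p` on horizon `{a,…,b}`: `X` is a nonempty subset of
the horizon and every time with positive demand has an acknowledgment at or after it. -/
def Feasible (a b : ℕ) (p : ℕ → ℝ) (X : Finset ℕ) : Prop :=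
  X.Nonempty ∧ X ⊆ Finset.Icc a b ∧ ∀ t ∈ Finset.Icc a b, 0 < p t → ∃ x ∈ X, t ≤ x

/-- Optimal cost `opt(I)` of the instance `p` on horizon `{a,…,b}`. -/
noncomputable def opt (d : ℝ) (a b : ℕ) (p : ℕ → ℝ) : ℝ :=
  sInf {c : ℝ | ∃ X : Finset ℕ, Feasible a b p X ∧ cost d a b p X = c}

/-- `Δ(I,Y,t) = D(I,Y) − D(I,Y ∪ {t})`. -/
noncomputable def delta (d : ℝ) (a b : ℕ) (p : ℕ → ℝ) (Y : Finset ℕ) (t : ℕ) : ℝ :=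
  delayCost d a b p Y - delayCost d a b p (insert t Y)

/-- Auxiliary error `τ([t1,t2], I, Î) = opt(O(I⟨t1,t2⟩,Î⟨t1,t2⟩)) − opt(U(I⟨t1,t2⟩,Î⟨t1,t2⟩))`. -/
noncomputable def auxErr (d : ℝ) (t1 t2 : ℕ) (p q : ℕ → ℝ) : ℝ :=
  opt d t1 t2 (fun t => max (p t) (q t)) - opt d t1 t2 (fun t => min (p t) (q t))

/-- The prediction error `η(I,Î)`: the supremum, over all partitions of `[n]` into consecutive
intervals that are non-empty for the underpredicted instance `U(I,Î)`, of the sum of auxiliary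
errors of the intervals. -/
noncomputable def etaErr (d : ℝ) (n : ℕ) (p q : ℕ → ℝ) : ℝ :=
  sSup {s : ℝ | ∃ (m : ℕ) (l : ℕ → ℕ), 0 < m ∧ l 0 = 0 ∧ l m = n ∧
    (∀ i < m, l i < l (i + 1)) ∧
    (∀ i < m, ∃ t ∈ Finset.Icc (l i + 1) (l (i + 1)), 0 < min (p t) (q t)) ∧
    s = ∑ i ∈ Finset.range m, auxErr d (l i + 1) (l (i + 1)) p q}


lemma ackWait_Icc {a b t : ℕ} (h : t ∈ Finset.Icc a b) : ackWait (Finset.Icc a b) t = 0 := by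
  unfold ackWait
  have ht : t ∈ (Finset.Icc a b).filter (fun x => t ≤ x) := by
    simp [Finset.mem_filter, Finset.mem_Icc.mp h]
  rw [dif_pos ⟨t, ht⟩]
  have h1 := Finset.min'_le _ t ht
  omega

lemma cost_nonneg {d : ℝ} (hd : 0 < d) {a b : ℕ} {p : ℕ → ℝ} (hp : ∀ t, 0 ≤ p t)
    (X : Finset ℕ) : 0 ≤ cost d a b p X := by
  unfold cost delayCost
  have hs : 0 ≤ ∑ t ∈ Finset.Icc a b, p t * (ackWait X t : ℝ) :=
    Finset.sum_nonneg fun t _ => mul_nonneg (hp t) (Nat.cast_nonneg _)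
  have h1 : (0:ℝ) ≤ 1 / d := by positivity
  have := mul_nonneg h1 hs
  positivity

lemma optSet_bddBelow {d : ℝ} (hd : 0 < d) {a b : ℕ} {p : ℕ → ℝ} (hp : ∀ t, 0 ≤ p t) :
    BddBelow {c : ℝ | ∃ X : Finset ℕ, Feasible a b p X ∧ cost d a b p X = c} := by
  refine ⟨0, ?_⟩
  rintro c ⟨X, _, rfl⟩
  exact cost_nonneg hd hp X

lemma feasible_Icc {a b : ℕ} (hab : a ≤ b) (p : ℕ → ℝ) : Feasible a b p (Finset.Icc a b) :=
  ⟨⟨a, Finset.mem_Icc.mpr ⟨le_refl a, hab⟩⟩, Finset.Subset.refl _,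
    fun t ht _ => ⟨t, ht, le_refl t⟩⟩

lemma opt_le_cost {d : ℝ} (hd : 0 < d) {a b : ℕ} {p : ℕ → ℝ} (hp : ∀ t, 0 ≤ p t)
    {X : Finset ℕ} (hX : Feasible a b p X) : opt d a b p ≤ cost d a b p X :=
  csInf_le (optSet_bddBelow hd hp) ⟨X, hX, rfl⟩

lemma cost_Icc {d : ℝ} {a b : ℕ} (p : ℕ → ℝ) :
    cost d a b p (Finset.Icc a b) = ((Finset.Icc a b).card : ℝ) := by
  unfold cost delayCost
  rw [Finset.sum_eq_zero, mul_zero, add_zero]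
  intro t ht
  rw [ackWait_Icc ht]
  simp

lemma opt_nonneg {d : ℝ} (hd : 0 < d) {a b : ℕ} {p : ℕ → ℝ} (hp : ∀ t, 0 ≤ p t) :
    0 ≤ opt d a b p := by
  apply Real.sInf_nonneg
  rintro c ⟨X, _, rfl⟩
  exact cost_nonneg hd hp X

lemma opt_mono {d : ℝ} (hd : 0 < d) {a b : ℕ} (hab : a ≤ b) {p p' : ℕ → ℝ}
    (hp : ∀ t, 0 ≤ p t) (h : ∀ t, p t ≤ p' t) : opt d a b p ≤ opt d a b p' := by
  refine le_csInf ⟨cost d a b p' (Finset.Icc a b), Finset.Icc a b, feasible_Icc hab p', rfl⟩ ?_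
  rintro c ⟨X, hX, rfl⟩
  have hfeas : Feasible a b p X :=
    ⟨hX.1, hX.2.1, fun t ht hpt => hX.2.2 t ht (lt_of_lt_of_le hpt (h t))⟩
  have hcost : cost d a b p X ≤ cost d a b p' X := by
    unfold cost delayCost
    have hs : ∑ t ∈ Finset.Icc a b, p t * (ackWait X t : ℝ)
        ≤ ∑ t ∈ Finset.Icc a b, p' t * (ackWait X t : ℝ) :=
      Finset.sum_le_sum fun t _ => mul_le_mul_of_nonneg_right (h t) (Nat.cast_nonneg _)
    have h1 : (0:ℝ) ≤ 1 / d := by positivity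
    nlinarith [mul_le_mul_of_nonneg_left hs h1]
  exact (opt_le_cost hd hp hfeas).trans hcost

/-- if the underpredicted instance has at least one time with positive demand,
then `|opt(I) − opt(Î)| ≤ η(I,Î)` (Lipschitzness of `η`). -/
theorem etaErr_lipschitz (d : ℝ) (hd : 0 < d) (n : ℕ) (p q : ℕ → ℝ)
    (hp : ∀ t, 0 ≤ p t) (hq : ∀ t, 0 ≤ q t)
    (hne : ∃ t ∈ Finset.Icc 1 n, 0 < min (p t) (q t)) :
    |opt d 1 n p - opt d 1 n q| ≤ etaErr d n p q := by
  obtain ⟨t0, ht0, hmin⟩ := hne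
  have hn : 1 ≤ n := le_trans (Finset.mem_Icc.mp ht0).1 (Finset.mem_Icc.mp ht0).2
  have hpmin : ∀ t, 0 ≤ min (p t) (q t) := fun t => le_min (hp t) (hq t)
  have hpmax : ∀ t, 0 ≤ max (p t) (q t) := fun t => le_trans (hp t) (le_max_left _ _)
  have key : |opt d 1 n p - opt d 1 n q| ≤ auxErr d 1 n p q := by
    have h1 : opt d 1 n (fun t => min (p t) (q t)) ≤ opt d 1 n p :=
      opt_mono hd hn hpmin (fun t => min_le_left _ _)
    have h2 : opt d 1 n (fun t => min (p t) (q t)) ≤ opt d 1 n q :=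
      opt_mono hd hn hpmin (fun t => min_le_right _ _)
    have h3 : opt d 1 n p ≤ opt d 1 n (fun t => max (p t) (q t)) :=
      opt_mono hd hn hp (fun t => le_max_left _ _)
    have h4 : opt d 1 n q ≤ opt d 1 n (fun t => max (p t) (q t)) :=
      opt_mono hd hn hq (fun t => le_max_right _ _)
    rw [abs_sub_le_iff]
    unfold auxErr
    constructor <;> linarith
  refine key.trans (le_csSup ?_ ?_)
  · -- bounded above by n
    refine ⟨(n : ℝ), ?_⟩
    rintro s ⟨m, l, hm, hl0, hlm, hinc, _, rfl⟩
    have hterm : ∀ i ∈ Finset.range m,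
        auxErr d (l i + 1) (l (i + 1)) p q ≤ (l (i + 1) : ℝ) - (l i : ℝ) := by
      intro i hi
      have hlt := hinc i (Finset.mem_range.mp hi)
      have hub : opt d (l i + 1) (l (i + 1)) (fun t => max (p t) (q t))
          ≤ ((Finset.Icc (l i + 1) (l (i + 1))).card : ℝ) := by
        have := opt_le_cost hd hpmax (feasible_Icc hlt (fun t => max (p t) (q t)))
        rwa [cost_Icc] at this
      have hlb : 0 ≤ opt d (l i + 1) (l (i + 1)) (fun t => min (p t) (q t)) :=
        opt_nonneg hd hpmin
      have hcard : ((Finset.Icc (l i + 1) (l (i + 1))).card : ℝ)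
          = (l (i + 1) : ℝ) - (l i : ℝ) := by
        rw [Nat.card_Icc]
        have : l (i + 1) + 1 - (l i + 1) = l (i + 1) - l i := by omega
        rw [this, Nat.cast_sub hlt.le]
      unfold auxErr
      rw [hcard] at hub
      linarith
    calc ∑ i ∈ Finset.range m, auxErr d (l i + 1) (l (i + 1)) p q
        ≤ ∑ i ∈ Finset.range m, ((l (i + 1) : ℝ) - (l i : ℝ)) := Finset.sum_le_sum hterm
      _ = (l m : ℝ) - (l 0 : ℝ) := Finset.sum_range_sub (fun i => (l i : ℝ)) m
      _ = (n : ℝ) := by rw [hlm, hl0]; simp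
  · -- membership via trivial partition
    refine ⟨1, fun i => if i = 0 then 0 else n, one_pos, rfl, by norm_num, ?_, ?_, ?_⟩
    · intro i hi
      interval_cases i
      simpa using (show 0 < n by omega)
    · intro i hi
      interval_cases i
      exact ⟨t0, by simpa using ht0, hmin⟩
    · rw [Finset.sum_range_one]
      norm_num
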